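/- Let P(z) = Σ_{j=0}^m A_j z^j be a matrix polynomial with A_m invertible, k ≥ 1, t > 0, satisfying k t^m ‖A_m‖_F ≥ t^{m-1}‖A_{m-1}‖_F ≥ ... ≥ t‖A_1‖_F ≥ ‖A_0‖_F, and suppose all A_j make angle at most α ≤ π/2 with some fixed nonzero matrix C. Then every eigenvalue z of P satisfies |z + kt − t| ≤ t‖A_m^{-1}‖_F [ (k‖A_m‖_F − ‖A_0‖_F/t^m)(sin α + cos α) + ‖A_0‖_F/t^m + 2 sin α Σ_{j=0}^{m-1} ‖A_j‖_F t^{j−m} ]. -/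

import Mathlib

set_option maxHeartbeats 1000000

/-- Frobenius norm of a complex matrix. -/
noncomputable def frobNorm {n : ℕ} (A : Matrix (Fin n) (Fin n) ℂ) : ℝ :=
  Real.sqrt (∑ i, ∑ j, ‖A i j‖ ^ 2)

noncomputable def matE (n : ℕ) :
    Matrix (Fin n) (Fin n) ℂ →ₗ[ℂ] EuclideanSpace ℂ (Fin n × Fin n) where
  toFun A := WithLp.toLp 2 (fun p => A p.1 p.2)
  map_add' := fun _ _ => rfl
  map_smul' := fun _ _ => rfl

lemma frobNorm_eq {n : ℕ} (A : Matrix (Fin n) (Fin n) ℂ) :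
    frobNorm A = ‖matE n A‖ := by
  rw [frobNorm, EuclideanSpace.norm_eq]
  rw [← Finset.sum_product']
  rfl

lemma frobNorm_nonneg {n : ℕ} (A : Matrix (Fin n) (Fin n) ℂ) : 0 ≤ frobNorm A :=
  Real.sqrt_nonneg _

lemma inner_matE {n : ℕ} (C A : Matrix (Fin n) (Fin n) ℂ) :
    (inner ℂ (matE n C) (matE n A) : ℂ) = Matrix.trace (C.conjTranspose * A) := by
  simp only [PiLp.inner_apply, RCLike.inner_apply, Matrix.trace, Matrix.diag,
    Matrix.mul_apply, Matrix.conjTranspose_apply]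
  rw [← Finset.univ_product_univ, Finset.sum_product]
  rw [Finset.sum_comm]
  exact Finset.sum_congr rfl fun _ _ => Finset.sum_congr rfl fun _ _ => mul_comm _ _

lemma angle_lemma {E : Type*} [NormedAddCommGroup E] [InnerProductSpace ℂ E]
    (c x y : E) (hc : c ≠ 0) (s co : ℝ) (hs : 0 ≤ s) (hco : 0 ≤ co)
    (hsc : s ^ 2 + co ^ 2 = 1)
    (hx : ‖x‖ * ‖c‖ * co ≤ (inner ℂ c x : ℂ).re)
    (hy : ‖y‖ * ‖c‖ * co ≤ (inner ℂ c y : ℂ).re)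
    (hyx : ‖y‖ ≤ ‖x‖) :
    ‖x - y‖ ≤ (‖x‖ - ‖y‖) * co + (‖x‖ + ‖y‖) * s := by
  have hcpos : (0:ℝ) < ‖c‖ := norm_pos_iff.mpr hc
  set u : E := ((‖c‖⁻¹ : ℝ) : ℂ) • c with hu
  have hun : ‖u‖ = 1 := by
    rw [hu, norm_smul, Complex.norm_real, Real.norm_eq_abs,
      abs_of_pos (inv_pos.mpr hcpos)]
    field_simp
  have hcu : c = ((‖c‖ : ℝ) : ℂ) • u := by
    rw [hu, smul_smul, ← Complex.ofReal_mul, mul_inv_cancel₀ hcpos.ne', Complex.ofReal_one,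
      one_smul]
  set p := (inner ℂ u x : ℂ).re with hp
  set q := (inner ℂ u y : ℂ).re with hq
  have hinner_real_smul_left : ∀ (r : ℝ) (w z : E),
      (inner ℂ (((r:ℝ):ℂ) • w) z : ℂ).re = r * (inner ℂ w z : ℂ).re := by
    intro r w z
    rw [inner_smul_left]
    simp [Complex.mul_re]
  have hinner_real_smul_right : ∀ (r : ℝ) (w z : E),
      (inner ℂ w (((r:ℝ):ℂ) • z) : ℂ).re = r * (inner ℂ w z : ℂ).re := by
    intro r w z
    rw [inner_smul_right]
    simp [Complex.mul_re]
  have hpx : ‖x‖ * co ≤ p := by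
    have h1 := hx
    rw [hcu, hinner_real_smul_left] at h1
    rw [norm_smul, Complex.norm_real, Real.norm_eq_abs, abs_of_pos hcpos, hun, mul_one] at h1
    have h2 : ‖c‖ * (‖x‖ * co) ≤ ‖c‖ * p := by nlinarith [h1]
    exact le_of_mul_le_mul_left h2 hcpos
  have hqy : ‖y‖ * co ≤ q := by
    have h1 := hy
    rw [hcu, hinner_real_smul_left] at h1
    rw [norm_smul, Complex.norm_real, Real.norm_eq_abs, abs_of_pos hcpos, hun, mul_one] at h1
    have h2 : ‖c‖ * (‖y‖ * co) ≤ ‖c‖ * q := by nlinarith [h1]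
    exact le_of_mul_le_mul_left h2 hcpos
  have hre_symm : ∀ w z : E, (inner ℂ w z : ℂ).re = (inner ℂ z w : ℂ).re := by
    intro w z
    rw [← inner_conj_symm]
    exact (Complex.conj_re _)
  set x' := x - ((p:ℝ):ℂ) • u with hx'
  set y' := y - ((q:ℝ):ℂ) • u with hy'
  have hnormsq : ∀ (r : ℝ) (w : E), (inner ℂ u w : ℂ).re = r →
      ‖w - ((r:ℝ):ℂ) • u‖ ^ 2 = ‖w‖ ^ 2 - r ^ 2 := by
    intro r w hr
    have h0 : ‖w - ((r:ℝ):ℂ) • u‖ ^ 2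
        = ‖w‖ ^ 2 - 2 * ((inner ℂ w (((r:ℝ):ℂ) • u) : ℂ)).re + ‖((r:ℝ):ℂ) • u‖ ^ 2 := by
      have := @norm_sub_sq ℂ E _ _ _ w (((r:ℝ):ℂ) • u)
      exact this
    rw [h0, hinner_real_smul_right, hre_symm w u, hr, norm_smul, hun, Complex.norm_real,
      Real.norm_eq_abs, mul_one, sq_abs]
    ring
  have hx'sq : ‖x'‖ ^ 2 = ‖x‖ ^ 2 - p ^ 2 := hnormsq p x rfl
  have hy'sq : ‖y'‖ ^ 2 = ‖y‖ ^ 2 - q ^ 2 := hnormsq q y rfl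
  have huu : (inner ℂ u u : ℂ) = 1 := by
    rw [@inner_self_eq_norm_sq_to_K ℂ, hun]
    norm_num
  have hre : (inner ℂ x y : ℂ).re = p * q + (inner ℂ x' y' : ℂ).re := by
    have e3 : (inner ℂ u y' : ℂ).re = 0 := by
      have h4 : (inner ℂ u c : ℂ).re = ‖c‖ := by
        conv_lhs => rw [hcu]
        rw [hinner_real_smul_right, huu]
        simp
      rw [hy', inner_sub_right]
      simp only [Complex.sub_re, hinner_real_smul_right]
      rw [huu, Complex.one_re, mul_one, ← hq, sub_self]
    have e1 : (inner ℂ x' y' : ℂ).re = (inner ℂ x y' : ℂ).re - p * (inner ℂ u y' : ℂ).re := by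
      rw [hx', inner_sub_left]
      simp only [Complex.sub_re, hinner_real_smul_left]
    have e2 : (inner ℂ x y' : ℂ).re = (inner ℂ x y : ℂ).re - q * (inner ℂ x u : ℂ).re := by
      rw [hy', inner_sub_right]
      simp only [Complex.sub_re, hinner_real_smul_right]
    rw [e1, e2, e3, hre_symm x u]
    ring
  have hx'le : ‖x'‖ ≤ ‖x‖ * s := by
    have hp2 : (‖x‖ * co) ^ 2 ≤ p ^ 2 :=
      pow_le_pow_left₀ (mul_nonneg (norm_nonneg _) hco) hpx 2
    have h1 : ‖x'‖ ^ 2 ≤ (‖x‖ * s) ^ 2 := by nlinarith [hx'sq, hp2, hsc, sq_nonneg ‖x‖]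
    exact le_of_pow_le_pow_left₀ two_ne_zero (mul_nonneg (norm_nonneg _) hs) h1
  have hy'le : ‖y'‖ ≤ ‖y‖ * s := by
    have hq2 : (‖y‖ * co) ^ 2 ≤ q ^ 2 :=
      pow_le_pow_left₀ (mul_nonneg (norm_nonneg _) hco) hqy 2
    have h1 : ‖y'‖ ^ 2 ≤ (‖y‖ * s) ^ 2 := by nlinarith [hy'sq, hq2, hsc, sq_nonneg ‖y‖]
    exact le_of_pow_le_pow_left₀ two_ne_zero (mul_nonneg (norm_nonneg _) hs) h1
  have hxy' : -((‖x‖ * s) * (‖y‖ * s)) ≤ (inner ℂ x' y' : ℂ).re := by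
    have h1 : -‖(inner ℂ x' y' : ℂ)‖ ≤ (inner ℂ x' y' : ℂ).re := by
      have := abs_le.mp (Complex.abs_re_le_norm (inner ℂ x' y' : ℂ))
      simpa using this.1
    have h2 : ‖(inner ℂ x' y' : ℂ)‖ ≤ (‖x‖ * s) * (‖y‖ * s) := by
      calc ‖(inner ℂ x' y' : ℂ)‖ ≤ ‖x'‖ * ‖y'‖ := norm_inner_le_norm x' y'
        _ ≤ (‖x‖ * s) * (‖y‖ * s) :=
          mul_le_mul hx'le hy'le (norm_nonneg _) (mul_nonneg (norm_nonneg _) hs)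
    linarith
  have hpq : (‖x‖ * co) * (‖y‖ * co) ≤ p * q := by
    have h0 : 0 ≤ ‖y‖ * co := mul_nonneg (norm_nonneg _) hco
    exact mul_le_mul hpx hqy h0 (le_trans (mul_nonneg (norm_nonneg _) hco) hpx)
  have hsub : ‖x - y‖ ^ 2 = ‖x‖ ^ 2 - 2 * (inner ℂ x y : ℂ).re + ‖y‖ ^ 2 := by
    have := @norm_sub_sq ℂ E _ _ _ x y
    simpa using this
  have htargetnn : 0 ≤ (‖x‖ - ‖y‖) * co + (‖x‖ + ‖y‖) * s :=
    add_nonneg (mul_nonneg (sub_nonneg.mpr hyx) hco)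
      (mul_nonneg (add_nonneg (norm_nonneg _) (norm_nonneg _)) hs)
  have hrelb : (‖x‖ * co) * (‖y‖ * co) - (‖x‖ * s) * (‖y‖ * s) ≤ (inner ℂ x y : ℂ).re := by
    linarith [hre, hpq, hxy']
  have hfin : ‖x - y‖ ^ 2 ≤ ((‖x‖ - ‖y‖) * co + (‖x‖ + ‖y‖) * s) ^ 2 := by
    have hcs : 0 ≤ (‖x‖ ^ 2 - ‖y‖ ^ 2) * (co * s) :=
      mul_nonneg (by nlinarith [norm_nonneg x, norm_nonneg y, hyx]) (mul_nonneg hco hs)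
    rw [hsub]
    nlinarith [hrelb, hsc, hcs, sq_nonneg ‖x‖, sq_nonneg ‖y‖]
  exact le_of_pow_le_pow_left₀ two_ne_zero htargetnn hfin

noncomputable def vnorm {n : ℕ} (v : Fin n → ℂ) : ℝ := Real.sqrt (∑ i, ‖v i‖ ^ 2)

lemma vnorm_nonneg {n : ℕ} (v : Fin n → ℂ) : 0 ≤ vnorm v := Real.sqrt_nonneg _

lemma vnorm_smul {n : ℕ} (c : ℂ) (v : Fin n → ℂ) : vnorm (c • v) = ‖c‖ * vnorm v := by
  unfold vnorm
  rw [← Real.sqrt_sq (norm_nonneg c), ← Real.sqrt_mul (sq_nonneg _), Finset.mul_sum]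
  congr 1
  refine Finset.sum_congr rfl fun i _ => ?_
  simp [norm_smul, mul_pow]

lemma vnorm_pos {n : ℕ} {v : Fin n → ℂ} (hv : v ≠ 0) : 0 < vnorm v := by
  obtain ⟨i, hi⟩ := Function.ne_iff.mp hv
  have hvi : v i ≠ 0 := by simpa using hi
  have h1 : (0:ℝ) < ‖v i‖ ^ 2 := pow_pos (norm_pos_iff.mpr hvi) 2
  have h2 : ‖v i‖ ^ 2 ≤ ∑ j, ‖v j‖ ^ 2 :=
    Finset.single_le_sum (f := fun j => ‖v j‖ ^ 2) (fun j _ => sq_nonneg _) (Finset.mem_univ i)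
  exact Real.sqrt_pos.mpr (lt_of_lt_of_le h1 h2)

lemma vnorm_mulVec_le {n : ℕ} (M : Matrix (Fin n) (Fin n) ℂ) (v : Fin n → ℂ) :
    vnorm (M.mulVec v) ≤ frobNorm M * vnorm v := by
  unfold vnorm frobNorm
  have h1 : ∀ i, ‖M.mulVec v i‖ ^ 2 ≤ (∑ j, ‖M i j‖ ^ 2) * (∑ j, ‖v j‖ ^ 2) := by
    intro i
    calc ‖M.mulVec v i‖ ^ 2 ≤ (∑ j, ‖M i j‖ * ‖v j‖) ^ 2 := by
          apply pow_le_pow_left₀ (norm_nonneg _)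
          refine le_trans ?_ (le_of_eq rfl)
          calc ‖M.mulVec v i‖ = ‖∑ j, M i j * v j‖ := by
                simp [Matrix.mulVec, dotProduct]
            _ ≤ ∑ j, ‖M i j * v j‖ := norm_sum_le _ _
            _ = ∑ j, ‖M i j‖ * ‖v j‖ := by simp [norm_mul]
      _ ≤ _ := Finset.sum_mul_sq_le_sq_mul_sq _ _ _
  calc Real.sqrt (∑ i, ‖M.mulVec v i‖ ^ 2)
      ≤ Real.sqrt ((∑ i, ∑ j, ‖M i j‖ ^ 2) * (∑ j, ‖v j‖ ^ 2)) := by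
        apply Real.sqrt_le_sqrt
        rw [Finset.sum_mul]
        exact Finset.sum_le_sum fun i _ => h1 i
    _ = _ := Real.sqrt_mul (by positivity) _

lemma frobNorm_smul {n : ℕ} (c : ℂ) (X : Matrix (Fin n) (Fin n) ℂ) :
    frobNorm (c • X) = ‖c‖ * frobNorm X := by
  rw [frobNorm_eq, frobNorm_eq, map_smul, norm_smul]

lemma frobNorm_add_le {n : ℕ} (X Y : Matrix (Fin n) (Fin n) ℂ) :
    frobNorm (X + Y) ≤ frobNorm X + frobNorm Y := by
  rw [frobNorm_eq, frobNorm_eq, frobNorm_eq, map_add]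
  exact norm_add_le _ _

lemma frobNorm_sum_le {n : ℕ} {ι : Type*} (s : Finset ι)
    (f : ι → Matrix (Fin n) (Fin n) ℂ) :
    frobNorm (∑ i ∈ s, f i) ≤ ∑ i ∈ s, frobNorm (f i) := by
  rw [frobNorm_eq, map_sum]
  refine (norm_sum_le _ _).trans (le_of_eq ?_)
  exact Finset.sum_congr rfl fun i _ => (frobNorm_eq _).symm

lemma matE_ne_zero {n : ℕ} {C : Matrix (Fin n) (Fin n) ℂ} (hC : C ≠ 0) :
    matE n C ≠ 0 := by
  intro h
  apply hC
  ext i j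
  exact congrFun (congrArg WithLp.ofLp h) (i, j)

/-- Corollary 1: if `k ≥ 1`, `t > 0`,
`k t^m ‖A_m‖_F ≥ t^{m-1}‖A_{m-1}‖_F ≥ ⋯ ≥ t‖A_1‖_F ≥ ‖A_0‖_F`, and all `A_j` make an
angle at most `α ≤ π/2` with some nonzero matrix `C`, then every eigenvalue `z` of `P`
satisfies `|z + kt − t| ≤ t‖A_m⁻¹‖_F [(k‖A_m‖_F − ‖A_0‖_F/t^m)(sin α + cos α)
  + ‖A_0‖_F/t^m + 2 sin α ∑_{j=0}^{m-1} ‖A_j‖_F t^{j−m}]`. -/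
theorem matrixPoly_eigenvalue_bound_shah_liman_scaled {n : ℕ} (m : ℕ) (hm : 0 < m)
    (A : ℕ → Matrix (Fin n) (Fin n) ℂ) (hA : IsUnit (A m).det)
    (k t : ℝ) (hk : 1 ≤ k) (ht : 0 < t)
    (htop : t ^ (m - 1) * frobNorm (A (m - 1)) ≤ k * t ^ m * frobNorm (A m))
    (hchain : ∀ j, j + 1 < m →
        t ^ j * frobNorm (A j) ≤ t ^ (j + 1) * frobNorm (A (j + 1)))
    (α : ℝ) (hα0 : 0 ≤ α) (hα : α ≤ Real.pi / 2)
    (C : Matrix (Fin n) (Fin n) ℂ) (hC : C ≠ 0)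
    (hangle : ∀ j ≤ m,
        frobNorm (A j) * frobNorm C * Real.cos α
          ≤ (Matrix.trace (C.conjTranspose * A j)).re)
    (z : ℂ)
    (hz : (∑ j ∈ Finset.range (m + 1), z ^ j • A j).det = 0) :
    ‖z + (k : ℂ) * t - t‖
      ≤ t * frobNorm (A m)⁻¹
          * ((k * frobNorm (A m) - frobNorm (A 0) / t ^ m)
                * (Real.sin α + Real.cos α)
              + frobNorm (A 0) / t ^ m
              + 2 * Real.sin α
                  * ∑ j ∈ Finset.range m, frobNorm (A j) * t ^ ((j : ℤ) - m)) := by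
  -- trivial case n = 0
  rcases Nat.eq_zero_or_pos n with hn | hn
  · subst hn
    exfalso
    simpa using hz
  have inst : Nonempty (Fin n) := ⟨⟨0, hn⟩⟩
  set s := Real.sin α with hsdef
  set co := Real.cos α with hcodef
  have hs0 : 0 ≤ s := Real.sin_nonneg_of_nonneg_of_le_pi hα0
    (le_trans hα (by linarith [Real.pi_pos]))
  have hc0 : 0 ≤ co := Real.cos_nonneg_of_mem_Icc ⟨by linarith [Real.pi_pos], hα⟩
  have hsc : s ^ 2 + co ^ 2 = 1 := Real.sin_sq_add_cos_sq α
  have hsco1 : 1 ≤ s + co := by nlinarith [hsc, hs0, hc0]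
  have htm : (0:ℝ) < t ^ m := pow_pos ht m
  set F := frobNorm (A m)⁻¹ with hFdef
  have hF0 : 0 ≤ F := frobNorm_nonneg _
  set a : ℕ → ℝ := fun j => frobNorm (A j) with ha
  have ha0 : ∀ j, 0 ≤ a j := fun j => frobNorm_nonneg _
  -- chain from 0
  have hchain0 : ∀ j, j < m → a 0 ≤ t ^ j * a j := by
    intro j
    induction j with
    | zero => intro _; simp [ha]
    | succ i ih =>
      intro hjm
      have h1 : i < m := by omega
      have h2 := hchain i (by omega)
      exact le_trans (ih h1) h2
  have h0m : a 0 ≤ k * t ^ m * a m := by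
    have h1 := hchain0 (m - 1) (by omega)
    exact le_trans h1 htop
  -- 1 ≤ F * a m
  have hone : 1 ≤ F * a m := by
    set v : Fin n → ℂ := Pi.single ⟨0, hn⟩ 1 with hv
    have hvne : v ≠ 0 := by
      intro h
      have := congrFun h ⟨0, hn⟩
      simp [hv] at this
    have hid : Matrix.mulVec (A m)⁻¹ (Matrix.mulVec (A m) v) = v := by
      rw [Matrix.mulVec_mulVec, Matrix.nonsing_inv_mul _ hA, Matrix.one_mulVec]
    have h1 : vnorm v ≤ F * (a m * vnorm v) := by
      calc vnorm v = vnorm (Matrix.mulVec (A m)⁻¹ (Matrix.mulVec (A m) v)) := by rw [hid]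
        _ ≤ F * vnorm (Matrix.mulVec (A m) v) := vnorm_mulVec_le _ _
        _ ≤ F * (a m * vnorm v) :=
            mul_le_mul_of_nonneg_left (vnorm_mulVec_le _ _) hF0
      
    have hvpos : 0 < vnorm v := vnorm_pos hvne
    have := (div_le_div_iff_of_pos_right hvpos).mpr h1
    nlinarith [h1, hvpos]
  -- rewrite the goal
  have hzp : ∀ j : ℕ, t ^ ((j:ℤ) - m) = t ^ j / t ^ m := by
    intro j
    rw [zpow_sub₀ ht.ne', zpow_natCast, zpow_natCast]
  set U : ℝ := (k * a m * t ^ m - a 0) * (s + co) + a 0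
      + 2 * s * ∑ j ∈ Finset.range m, t ^ j * a j with hU
  have hgoal_eq : t * F * ((k * a m - a 0 / t ^ m) * (s + co) + a 0 / t ^ m
      + 2 * s * ∑ j ∈ Finset.range m, a j * t ^ ((j : ℤ) - m))
      = t * F * U / t ^ m := by
    simp only [hzp]
    rw [hU]
    have hsum : ∑ j ∈ Finset.range m, a j * (t ^ j / t ^ m)
        = (∑ j ∈ Finset.range m, t ^ j * a j) / t ^ m := by
      rw [Finset.sum_div]
      exact Finset.sum_congr rfl fun j _ => by ring
    rw [hsum]
    field_simp
  rw [hgoal_eq, le_div_iff₀ htm]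
  -- U is at least k * a m * t^m
  have hsumnn : 0 ≤ ∑ j ∈ Finset.range m, t ^ j * a j :=
    Finset.sum_nonneg fun j _ => mul_nonneg (pow_nonneg ht.le j) (ha0 j)
  have hUkam : k * a m * t ^ m ≤ U := by nlinarith [h0m, hsco1, hs0, hsumnn]
  have hUnn : 0 ≤ U := le_trans (mul_nonneg (mul_nonneg (by linarith : (0:ℝ) ≤ k) (ha0 m)) htm.le) hUkam
  rcases le_or_gt ‖z‖ t with hzt | hzt
  · -- small |z|
    have h1 : ‖z + (k:ℂ) * t - t‖ ≤ k * t := by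
      have e : z + (k:ℂ) * t - t = z + ((k * t - t : ℝ) : ℂ) := by push_cast; ring
      rw [e]
      calc ‖z + ((k * t - t : ℝ) : ℂ)‖
          ≤ ‖z‖ + ‖((k * t - t : ℝ) : ℂ)‖ := norm_add_le _ _
        _ = ‖z‖ + (k * t - t) := by
            rw [Complex.norm_real, Real.norm_eq_abs, abs_of_nonneg (by nlinarith)]
        _ ≤ t + (k * t - t) := by linarith
        _ = k * t := by ring
    have e1 : k * t ^ m ≤ F * (k * a m * t ^ m) := by
      have := mul_le_mul_of_nonneg_left hone (le_of_lt (mul_pos (lt_of_lt_of_le one_pos hk) htm))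
      nlinarith [this]
    have e2 : F * (k * a m * t ^ m) ≤ F * U := mul_le_mul_of_nonneg_left hUkam hF0
    calc ‖z + (k:ℂ) * t - t‖ * t ^ m ≤ (k * t) * t ^ m :=
          mul_le_mul_of_nonneg_right h1 htm.le
      _ = t * (k * t ^ m) := by ring
      _ ≤ t * (F * U) := mul_le_mul_of_nonneg_left (le_trans e1 e2) ht.le
      _ = t * F * U := by ring
  · -- main case t < |z|
    have haz : (0:ℝ) < ‖z‖ := lt_trans ht hzt
    set az := ‖z‖ with hazdef
    set lam : ℂ := z + (k:ℂ) * t - t with hlam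
    set P : Matrix (Fin n) (Fin n) ℂ := ∑ j ∈ Finset.range (m+1), z ^ j • A j with hPdef
    obtain ⟨v, hvne, hv⟩ := (Matrix.exists_mulVec_eq_zero_iff).mpr hz
    set S : Matrix (Fin n) (Fin n) ℂ :=
      (t:ℂ) • A 0 + (∑ j ∈ Finset.Ico 1 m, z ^ j • ((t:ℂ) • A j - A (j-1)))
        + z ^ m • (((k * t : ℝ) : ℂ) • A m - A (m-1)) with hSdef
    -- pieces of the key identity
    have hreidx : ∑ j ∈ Finset.Ico 1 (m+1), z ^ j • A (j-1)
        = ∑ i ∈ Finset.range m, z ^ (i+1) • A i := by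
      rw [Finset.sum_Ico_eq_sum_range]
      simp only [Nat.add_sub_cancel]
      refine Finset.sum_congr rfl fun i _ => ?_
      have h3 : 1 + i - 1 = i := by omega
      rw [h3, add_comm 1 i]
    have e1 : z • P = z ^ (m+1) • A m
        + ((∑ j ∈ Finset.Ico 1 m, z ^ j • A (j-1)) + z ^ m • A (m-1)) := by
      have h1 : z • P = ∑ j ∈ Finset.range (m+1), z ^ (j+1) • A j := by
        rw [hPdef, Finset.smul_sum]
        exact Finset.sum_congr rfl fun j _ => by rw [smul_smul, ← pow_succ']
      rw [h1, Finset.sum_range_succ, ← hreidx,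
        Finset.sum_Ico_succ_top (by omega : 1 ≤ m)]
      abel
    have e2 : (t:ℂ) • P = (t:ℂ) • A 0
        + ((∑ j ∈ Finset.Ico 1 m, (t:ℂ) • (z ^ j • A j)) + (t:ℂ) • (z ^ m • A m)) := by
      have h1 : (t:ℂ) • P = ∑ j ∈ Finset.range (m+1), (t:ℂ) • (z ^ j • A j) :=
        Finset.smul_sum
      have h2 : ∑ j ∈ Finset.range m, (t:ℂ) • (z ^ j • A j)
          = (t:ℂ) • (z ^ 0 • A 0)
            + ∑ j ∈ Finset.Ico 1 m, (t:ℂ) • (z ^ j • A j) := by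
        rw [Finset.range_eq_Ico, Finset.sum_eq_sum_Ico_succ_bot hm]
      rw [h1, Finset.sum_range_succ, h2]
      simp only [pow_zero, one_smul]
      abel
    have hkey : (z ^ m * lam) • A m - S = (z - (t:ℂ)) • P := by
      have hsplit : ∑ j ∈ Finset.Ico 1 m, z ^ j • ((t:ℂ) • A j - A (j-1))
          = (∑ j ∈ Finset.Ico 1 m, (t:ℂ) • (z ^ j • A j))
            - ∑ j ∈ Finset.Ico 1 m, z ^ j • A (j-1) := by
        rw [← Finset.sum_sub_distrib]
        exact Finset.sum_congr rfl fun j _ => by rw [smul_sub, smul_comm]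
      rw [hSdef, hsplit, sub_smul, e1, e2, hlam]
      module
    -- vector identity
    have hvec : (z ^ m * lam) • Matrix.mulVec (A m) v = Matrix.mulVec S v := by
      have h1 := congrArg (fun M : Matrix (Fin n) (Fin n) ℂ => Matrix.mulVec M v) hkey
      simp only [Matrix.sub_mulVec, Matrix.smul_mulVec] at h1
      rw [hv, smul_zero] at h1
      exact sub_eq_zero.mp h1
    have hv2 : (z ^ m * lam) • v = Matrix.mulVec (A m)⁻¹ (Matrix.mulVec S v) := by
      rw [← hvec, Matrix.mulVec_smul, Matrix.mulVec_mulVec,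
        Matrix.nonsing_inv_mul _ hA, Matrix.one_mulVec]
    -- norm step
    have hstep : az ^ m * ‖lam‖ ≤ F * frobNorm S := by
      have h1 : vnorm ((z ^ m * lam) • v) = az ^ m * ‖lam‖ * vnorm v := by
        rw [vnorm_smul]
        simp only [norm_mul, norm_pow]
        rfl
      have h2 : vnorm ((z ^ m * lam) • v) ≤ F * (frobNorm S * vnorm v) := by
        rw [hv2]
        exact (vnorm_mulVec_le _ _).trans
          (mul_le_mul_of_nonneg_left (vnorm_mulVec_le _ _) hF0)
      rw [h1, ← mul_assoc] at h2
      exact le_of_mul_le_mul_right h2 (vnorm_pos hvne)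
    -- bound on frobNorm S
    set d : ℕ → ℝ := fun j => frobNorm ((t:ℂ) • A j - A (j-1)) with hd
    set dtop : ℝ := frobNorm (((k * t : ℝ):ℂ) • A m - A (m-1)) with hdtopdef
    have hd0 : ∀ j, 0 ≤ d j := fun j => frobNorm_nonneg _
    have hdtop0 : 0 ≤ dtop := frobNorm_nonneg _
    have hSb : frobNorm S ≤ t * a 0 + (∑ j ∈ Finset.Ico 1 m, az ^ j * d j)
        + az ^ m * dtop := by
      have b1 : frobNorm ((t:ℂ) • A 0) = t * a 0 := by
        rw [frobNorm_smul, Complex.norm_real, Real.norm_eq_abs, abs_of_pos ht]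
      have b3 : frobNorm (z ^ m • (((k * t : ℝ):ℂ) • A m - A (m-1))) = az ^ m * dtop := by
        rw [frobNorm_smul, norm_pow, hdtopdef]
      have b2 : frobNorm (∑ j ∈ Finset.Ico 1 m, z ^ j • ((t:ℂ) • A j - A (j-1)))
          ≤ ∑ j ∈ Finset.Ico 1 m, az ^ j * d j := by
        refine (frobNorm_sum_le _ _).trans (le_of_eq ?_)
        refine Finset.sum_congr rfl fun j _ => ?_
        rw [frobNorm_smul, norm_pow, hd]
      have hstep2 := frobNorm_add_le ((t:ℂ) • A 0
        + (∑ j ∈ Finset.Ico 1 m, z ^ j • ((t:ℂ) • A j - A (j-1))))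
        (z ^ m • (((k * t : ℝ):ℂ) • A m - A (m-1)))
      have hstep3 := frobNorm_add_le ((t:ℂ) • A 0)
        (∑ j ∈ Finset.Ico 1 m, z ^ j • ((t:ℂ) • A j - A (j-1)))
      rw [hSdef]
      rw [b1] at hstep3
      rw [b3] at hstep2
      linarith [hstep2, hstep3, b2]
    -- angle conditions at the level of matE
    have hangC : ∀ (r : ℝ) (j : ℕ), 0 < r → j ≤ m →
        ‖(r:ℂ) • matE n (A j)‖ * ‖matE n C‖ * co
          ≤ (inner ℂ (matE n C) ((r:ℂ) • matE n (A j)) : ℂ).re := by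
      intro r j hr hj
      rw [norm_smul, Complex.norm_real, Real.norm_eq_abs, abs_of_pos hr,
        inner_smul_right, Complex.re_ofReal_mul, inner_matE, ← frobNorm_eq, ← frobNorm_eq]
      have h1 := hangle j hj
      nlinarith [h1, hr]
    have hang1 : ∀ j : ℕ, j ≤ m →
        ‖matE n (A j)‖ * ‖matE n C‖ * co
          ≤ (inner ℂ (matE n C) (matE n (A j)) : ℂ).re := by
      intro j hj
      rw [inner_matE, ← frobNorm_eq, ← frobNorm_eq]
      exact hangle j hj
    have hnormAj : ∀ j, ‖matE n (A j)‖ = a j := fun j => (frobNorm_eq _).symm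
    have hnormsm : ∀ (r : ℝ) (j : ℕ), 0 < r → ‖(r:ℂ) • matE n (A j)‖ = r * a j := by
      intro r j hr
      rw [norm_smul, Complex.norm_real, Real.norm_eq_abs, abs_of_pos hr, hnormAj]
    -- termwise angle bounds
    have hdj : ∀ j, 1 ≤ j → j < m →
        d j ≤ (t * a j - a (j-1)) * co + (t * a j + a (j-1)) * s := by
      intro j h1 h2
      have hyx : a (j-1) ≤ t * a j := by
        have h3 := hchain (j-1) (by omega)
        rw [Nat.sub_add_cancel h1] at h3
        have h4 : t ^ j = t ^ (j-1) * t := by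
          rw [← pow_succ, Nat.sub_add_cancel h1]
        rw [h4, mul_assoc] at h3
        exact le_of_mul_le_mul_left h3 (pow_pos ht (j-1))
      have happ := angle_lemma (matE n C) ((t:ℂ) • matE n (A j)) (matE n (A (j-1)))
        (matE_ne_zero hC) s co hs0 hc0 hsc
        (by rw [hnormsm t j ht]; exact (hnormsm t j ht) ▸ hangC t j ht (le_of_lt h2))
        (by rw [hnormAj]; exact (hnormAj (j-1)) ▸ hang1 (j-1) (by omega))
        (by rw [hnormsm t j ht, hnormAj]; exact hyx)
      rw [hnormsm t j ht, hnormAj] at happ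
      have hxy : ((t:ℂ) • matE n (A j)) - matE n (A (j-1))
          = matE n ((t:ℂ) • A j - A (j-1)) := by rw [map_sub, map_smul]
      rw [hxy, ← frobNorm_eq] at happ
      exact happ
    have hktpos : (0:ℝ) < k * t := mul_pos (lt_of_lt_of_le one_pos hk) ht
    have hdm : dtop ≤ (k * t * a m - a (m-1)) * co + (k * t * a m + a (m-1)) * s := by
      have hyx : a (m-1) ≤ k * t * a m := by
        have h3 := htop
        have h4 : t ^ m = t ^ (m-1) * t := by
          rw [← pow_succ, Nat.sub_add_cancel hm]
        rw [h4] at h3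
        have h5 : t ^ (m-1) * a (m-1) ≤ t ^ (m-1) * (k * t * a m) := by
          calc t ^ (m-1) * a (m-1) ≤ k * (t ^ (m-1) * t) * a m := h3
            _ = t ^ (m-1) * (k * t * a m) := by ring
        exact le_of_mul_le_mul_left h5 (pow_pos ht (m-1))
      have happ := angle_lemma (matE n C) (((k * t : ℝ):ℂ) • matE n (A m)) (matE n (A (m-1)))
        (matE_ne_zero hC) s co hs0 hc0 hsc
        (hangC (k * t) m hktpos (le_refl m))
        (hang1 (m-1) (by omega))
        (by rw [hnormsm (k * t) m hktpos, hnormAj]; exact hyx)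
      rw [hnormsm (k * t) m hktpos, hnormAj] at happ
      have hxy : (((k * t : ℝ):ℂ) • matE n (A m)) - matE n (A (m-1))
          = matE n (((k * t : ℝ):ℂ) • A m - A (m-1)) := by rw [map_sub, map_smul]
      rw [hxy, ← frobNorm_eq] at happ
      exact happ
    -- telescoping
    set g : ℕ → ℝ := fun i => t ^ (i+1) * a i with hg
    have htel1 : ∑ j ∈ Finset.Ico 1 m, (g j - g (j-1)) = g (m-1) - g 0 := by
      rw [Finset.sum_Ico_eq_sum_range]
      have h1 : ∀ i, g (1 + i) - g (1 + i - 1) = g (i+1) - g i := by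
        intro i
        have h2 : 1 + i - 1 = i := by omega
        rw [h2, add_comm 1 i]
      rw [Finset.sum_congr rfl fun i _ => h1 i, Finset.sum_range_sub g]
    have htelA : ∑ j ∈ Finset.Ico 1 m, g j = (∑ j ∈ Finset.range m, g j) - g 0 := by
      rw [Finset.range_eq_Ico, Finset.sum_eq_sum_Ico_succ_bot hm]
      simp only [zero_add]
      ring
    have htelB : ∑ j ∈ Finset.Ico 1 m, g (j-1)
        = (∑ j ∈ Finset.range m, g j) - g (m-1) := by
      rw [Finset.sum_Ico_eq_sum_range]
      have h1 : ∀ i, g (1 + i - 1) = g i := by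
        intro i
        have h2 : 1 + i - 1 = i := by omega
        rw [h2]
      rw [Finset.sum_congr rfl fun i _ => h1 i]
      have h4 : ∑ j ∈ Finset.range m, g j = ∑ j ∈ Finset.range (m-1), g j + g (m-1) := by
        conv_lhs => rw [show m = (m-1)+1 by omega]
        rw [Finset.sum_range_succ]
      rw [h4]
      ring
    -- claim B : the telescoped bound
    have hgB : ∀ j, 1 ≤ j → j < m →
        t ^ j * d j ≤ (g j - g (j-1)) * co + (g j + g (j-1)) * s := by
      intro j h1 h2
      have h3 : g (j-1) = t ^ j * a (j-1) := by
        rw [hg]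
        simp only
        rw [Nat.sub_add_cancel h1]
      have h4 := mul_le_mul_of_nonneg_left (hdj j h1 h2) (pow_nonneg ht.le j)
      calc t ^ j * d j ≤ t ^ j * ((t * a j - a (j-1)) * co + (t * a j + a (j-1)) * s) := h4
        _ = (g j - g (j-1)) * co + (g j + g (j-1)) * s := by
            have h3b : g j = t ^ (j+1) * a j := by rw [hg]
            rw [h3, h3b]
            ring
    have hmid : ∑ j ∈ Finset.Ico 1 m, t ^ j * d j
        ≤ (g (m-1) - g 0) * co
          + ((∑ j ∈ Finset.range m, g j) - g 0
            + ((∑ j ∈ Finset.range m, g j) - g (m-1))) * s := by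
      calc ∑ j ∈ Finset.Ico 1 m, t ^ j * d j
          ≤ ∑ j ∈ Finset.Ico 1 m, ((g j - g (j-1)) * co + (g j + g (j-1)) * s) := by
            refine Finset.sum_le_sum fun j hj => ?_
            have hj' := Finset.mem_Ico.mp hj
            exact hgB j hj'.1 hj'.2
        _ = (∑ j ∈ Finset.Ico 1 m, (g j - g (j-1))) * co
            + (∑ j ∈ Finset.Ico 1 m, (g j + g (j-1))) * s := by
            rw [Finset.sum_add_distrib, ← Finset.sum_mul, ← Finset.sum_mul]
        _ = _ := by
            rw [htel1, Finset.sum_add_distrib, htelA, htelB]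
    have hgm1 : g (m-1) = t ^ m * a (m-1) := by
      rw [hg]
      simp only
      rw [Nat.sub_add_cancel hm]
    have hG : ∑ j ∈ Finset.range m, g j = t * ∑ j ∈ Finset.range m, t ^ j * a j := by
      rw [Finset.mul_sum]
      exact Finset.sum_congr rfl fun j _ => by rw [hg]; simp only; ring
    have hB : t * a 0 + (∑ j ∈ Finset.Ico 1 m, t ^ j * d j) + t ^ m * dtop ≤ t * U := by
      have h5 := mul_le_mul_of_nonneg_left hdm htm.le
      have hg0 : g 0 = t * a 0 := by rw [hg]; ring
      rw [hgm1, hg0, hG] at hmid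
      rw [hU]
      nlinarith [hmid, h5]
    -- cross comparison t^m * az^j ≤ az^m * t^j  for j ≤ m
    have hcross : ∀ j, j ≤ m → t ^ m * az ^ j ≤ az ^ m * t ^ j := by
      intro j hj
      have e : t ^ m = t ^ j * t ^ (m-j) := by rw [← pow_add, Nat.add_sub_cancel' hj]
      have e2 : az ^ m = az ^ j * az ^ (m-j) := by rw [← pow_add, Nat.add_sub_cancel' hj]
      have h1 : t ^ (m-j) ≤ az ^ (m-j) := pow_le_pow_left₀ ht.le hzt.le _
      have h2 : (0:ℝ) ≤ t ^ j * az ^ j := by positivity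
      rw [e, e2]
      nlinarith [h1, h2]
    -- put it together
    have hT : t ^ m * frobNorm S
        ≤ az ^ m * (t * a 0 + (∑ j ∈ Finset.Ico 1 m, t ^ j * d j) + t ^ m * dtop) := by
      have h1 : t ^ m * frobNorm S
          ≤ t ^ m * (t * a 0 + (∑ j ∈ Finset.Ico 1 m, az ^ j * d j) + az ^ m * dtop) :=
        mul_le_mul_of_nonneg_left hSb htm.le
      have h2 : t ^ m * (t * a 0) ≤ az ^ m * (t * a 0) :=
        mul_le_mul_of_nonneg_right (pow_le_pow_left₀ ht.le hzt.le m)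
          (mul_nonneg ht.le (ha0 0))
      have h3 : t ^ m * (∑ j ∈ Finset.Ico 1 m, az ^ j * d j)
          ≤ az ^ m * (∑ j ∈ Finset.Ico 1 m, t ^ j * d j) := by
        rw [Finset.mul_sum, Finset.mul_sum]
        refine Finset.sum_le_sum fun j hj => ?_
        have hj' := Finset.mem_Ico.mp hj
        have hcj := hcross j (by omega)
        calc t ^ m * (az ^ j * d j) = (t ^ m * az ^ j) * d j := by ring
          _ ≤ (az ^ m * t ^ j) * d j := mul_le_mul_of_nonneg_right hcj (hd0 j)
          _ = az ^ m * (t ^ j * d j) := by ring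
      have h4 : t ^ m * (az ^ m * dtop) ≤ az ^ m * (t ^ m * dtop) := le_of_eq (by ring)
      calc t ^ m * frobNorm S
          ≤ t ^ m * (t * a 0 + (∑ j ∈ Finset.Ico 1 m, az ^ j * d j) + az ^ m * dtop) := h1
        _ = t ^ m * (t * a 0) + t ^ m * (∑ j ∈ Finset.Ico 1 m, az ^ j * d j)
            + t ^ m * (az ^ m * dtop) := by ring
        _ ≤ az ^ m * (t * a 0) + az ^ m * (∑ j ∈ Finset.Ico 1 m, t ^ j * d j)
            + az ^ m * (t ^ m * dtop) := by linarith [h2, h3, h4]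
        _ = _ := by ring
    -- final assembly
    have hfin : ‖lam‖ * t ^ m * az ^ m ≤ (t * F * U) * az ^ m := by
      calc ‖lam‖ * t ^ m * az ^ m
          = (az ^ m * ‖lam‖) * t ^ m := by ring
        _ ≤ (F * frobNorm S) * t ^ m := mul_le_mul_of_nonneg_right hstep htm.le
        _ = F * (t ^ m * frobNorm S) := by ring
        _ ≤ F * (az ^ m * (t * a 0 + (∑ j ∈ Finset.Ico 1 m, t ^ j * d j)
              + t ^ m * dtop)) := mul_le_mul_of_nonneg_left hT hF0
        _ ≤ F * (az ^ m * (t * U)) := by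
            refine mul_le_mul_of_nonneg_left ?_ hF0
            exact mul_le_mul_of_nonneg_left hB (pow_nonneg haz.le m)
        _ = (t * F * U) * az ^ m := by ring
    have hazm : (0:ℝ) < az ^ m := pow_pos haz m
    have := le_of_mul_le_mul_right hfin hazm
    linarith [this]
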